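/- In an ASAF, for any set S ⊆ A ∪ Σ ∪ Π, if α ∈ Σ ∩ S extendedly defeats X given S and t(α) is defeated (t(α) ∈ Def(S)), then every argument on the support path witnessing the extended defeat from t(α) to X (or to s(X)) is in Def(S), assuming Def is closed under the ASAF defeat rules. -/
import Mathlib


/- An ASAF has arguments `A`, attack names `B` and support names `C`; its elements
are `Sum.inl a`, `Sum.inr (Sum.inl α)` and `Sum.inr (Sum.inr β)`. -/
variable {A B C : Type*}

/-- The source of an element (defined for attacks and supports only). -/
def srcOf (sB : B → A) (sC : C → A) : A ⊕ B ⊕ C → Option A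
  | Sum.inl _ => none
  | Sum.inr (Sum.inl α) => some (sB α)
  | Sum.inr (Sum.inr β) => some (sC β)

/-- α def X: t(α) = X or t(α) = s(X). -/
def asafAtt (sB : B → A) (tB : B → A ⊕ B ⊕ C) (sC : C → A)
    (α : B) (X : A ⊕ B ⊕ C) : Prop :=
  tB α = X ∨ ∃ b : A, srcOf sB sC X = some b ∧ tB α = Sum.inl b

/-- The edge relation (Π ∩ S)*: pairs (s(β), t(β)) for supports β ∈ S. -/
def piStar (sC : C → A) (tC : C → A ⊕ B ⊕ C) (S : Set (A ⊕ B ⊕ C))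
    (x y : A ⊕ B ⊕ C) : Prop :=
  ∃ β : C, Sum.inr (Sum.inr β) ∈ S ∧ x = Sum.inl (sC β) ∧ y = tC β

/-- α def_S X: α def X, or t(α) = b ∈ A and (b,X) ∈ (Π∩S)⁺ or (b,s(X)) ∈ (Π∩S)⁺. -/
def asafDefeats (sB : B → A) (tB : B → A ⊕ B ⊕ C) (sC : C → A)
    (tC : C → A ⊕ B ⊕ C) (S : Set (A ⊕ B ⊕ C)) (α : B) (X : A ⊕ B ⊕ C) : Prop :=
  asafAtt sB tB sC α X ∨
    ∃ b : A, tB α = Sum.inl b ∧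
      (Relation.TransGen (piStar sC tC S) (Sum.inl b) X ∨
        ∃ c : A, srcOf sB sC X = some c ∧
          Relation.TransGen (piStar sC tC S) (Sum.inl b) (Sum.inl c))

/-- ASAF-defeated set. -/
def asafDef (sB : B → A) (tB : B → A ⊕ B ⊕ C) (sC : C → A) (tC : C → A ⊕ B ⊕ C)
    (S : Set (A ⊕ B ⊕ C)) : Set (A ⊕ B ⊕ C) :=
  {X | ∃ α : B, Sum.inr (Sum.inl α) ∈ S ∧ asafDefeats sB tB sC tC S α X}

/-- ASAF-acceptable set. -/
def asafAcc (sB : B → A) (tB : B → A ⊕ B ⊕ C) (sC : C → A) (tC : C → A ⊕ B ⊕ C)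
    (S : Set (A ⊕ B ⊕ C)) : Set (A ⊕ B ⊕ C) :=
  {X | ∀ α : B, asafDefeats sB tB sC tC S α X →
    Sum.inr (Sum.inl α) ∈ asafDef sB tB sC tC S}

/-- Acyclicity of the support graph Π*. -/
def piAcyclic (sC : C → A) (tC : C → A ⊕ B ⊕ C) : Prop :=
  ∀ x : A ⊕ B ⊕ C,
    ¬ Relation.TransGen (fun x y => ∃ β : C, x = Sum.inl (sC β) ∧ y = tC β) x x

/-- In an ASAF, for any complete extension S, the defeated set is closed along
support edges in Π ∩ S: if argument b is defeated and (b,c) ∈ (Π∩S)*, then c is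
defeated as well. -/
theorem asaf_def_closed_along_supports [Finite A] [Finite B] [Finite C]
    (sB : B → A) (tB : B → A ⊕ B ⊕ C) (sC : C → A) (tC : C → A ⊕ B ⊕ C)
    (hacyc : piAcyclic (B := B) sC tC) (S : Set (A ⊕ B ⊕ C))
    (hcf : S ∩ asafDef sB tB sC tC S = ∅) (hfix : S = asafAcc sB tB sC tC S) :
    ∀ b c : A, Sum.inl b ∈ asafDef sB tB sC tC S →
      (∃ β : C, Sum.inr (Sum.inr β) ∈ S ∧ sC β = b ∧ tC β = Sum.inl c) →
      Sum.inl c ∈ asafDef sB tB sC tC S := by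
  rintro b c ⟨α, hαS, hdef⟩ ⟨β, hβS, hsβ, htβ⟩
  refine ⟨α, hαS, Or.inr ?_⟩
  have hedge : piStar sC tC S (Sum.inl b) (Sum.inl c) :=
    ⟨β, hβS, by rw [hsβ], htβ.symm⟩
  rcases hdef with hatt | ⟨b0, htα, hchain⟩
  · rcases hatt with h | ⟨b', hsrc, _⟩
    · exact ⟨b, h, Or.inl (Relation.TransGen.single hedge)⟩
    · simp [srcOf] at hsrc
  · rcases hchain with hch | ⟨c', hsrc, _⟩
    · exact ⟨b0, htα, Or.inl (hch.tail hedge)⟩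
    · simp [srcOf] at hsrc
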